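/- arXiv:2411.04651 — 4 statements merged into one kernel-verified Lean document; each statement's English description precedes it below -/
import Mathlib

section
/- The function h(t) = (t + sinh(t)·cosh(t)) / sinh²(t) is monotonically decreasing on (0, ∞). -/
theorem stmt_4 :
    AntitoneOn (fun t : ℝ => (t + Real.sinh t * Real.cosh t) / (Real.sinh t) ^ 2)
      (Set.Ioi 0) := by
  have hs : ∀ x : ℝ, x ∈ Set.Ioi (0:ℝ) → Real.sinh x ≠ 0 := fun x hx =>
    ne_of_gt (Real.sinh_pos_iff.2 hx)
  apply StrictAntiOn.antitoneOn
  apply strictAntiOn_of_deriv_neg (convex_Ioi 0)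
  · exact ContinuousOn.div
      (Continuous.continuousOn (by continuity))
      (Continuous.continuousOn (by continuity))
      (fun x hx => pow_ne_zero 2 (hs x hx))
  · intro x hx
    rw [interior_Ioi] at hx
    have hx' : 0 < x := hx
    have hsp : 0 < Real.sinh x := Real.sinh_pos_iff.2 hx'
    have hcp : 0 < Real.cosh x := Real.cosh_pos x
    have hnum : HasDerivAt (fun t : ℝ => t + Real.sinh t * Real.cosh t)
        (1 + (Real.cosh x * Real.cosh x + Real.sinh x * Real.sinh x)) x :=
      (hasDerivAt_id x).add ((Real.hasDerivAt_sinh x).mul (Real.hasDerivAt_cosh x))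
    have hden : HasDerivAt (fun t : ℝ => (Real.sinh t) ^ 2)
        (2 * Real.sinh x ^ 1 * Real.cosh x) x :=
      HasDerivAt.fun_pow (Real.hasDerivAt_sinh x) 2
    have hdiv := hnum.fun_div hden (pow_ne_zero 2 (ne_of_gt hsp))
    rw [hdiv.deriv]
    apply div_neg_of_neg_of_pos
    · have hc2 : Real.cosh x ^ 2 = 1 + Real.sinh x ^ 2 := (Real.cosh_sq x).trans (add_comm _ _)
      nlinarith [mul_pos hsp hcp, mul_pos hx' (mul_pos hsp hcp)]
    · positivity
end

section
/- Let β₁ < β < β₂, let v : Ω → ℂ with Ω ⊂ ℝ² a wedge parametrized in polar coordinates by r ∈ (0,∞), φ ∈ (0,θ), and let c ∈ L²((0,θ)). Then ‖c‖_{L²(0,θ)} ≲_β A^{(β₂−β)/(β₂−β₁)} · B^{(β−β₁)/(β₂−β₁)}, where A² = ∫₀^θ ∫₀^∞ |r^{-β₁} v|² dr/r dφ and B² = ∫₀^θ ∫₀^∞ |r^{-β₂}(v − c(φ) r^β)|² dr/r dφ, provided A, B are finite. -/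
open MeasureTheory Set

/-- The measure `dr/r` on `(0,∞)`. -/
noncomputable def haarHalfLine : Measure ℝ :=
  (volume.restrict (Set.Ioi (0 : ℝ))).withDensity (fun r => ENNReal.ofReal r⁻¹)

/-- The weighted wedge norm `(∫₀^θ ∫₀^∞ |r^{-η} w(r,φ)|² dr/r dφ)^{1/2}`. -/
noncomputable def wedgeNorm (θ : ℝ) (w : ℝ → ℝ → ℂ) (η : ℝ) : ENNReal :=
  (∫⁻ φ in Set.Ioo (0 : ℝ) θ,
    ∫⁻ r, ENNReal.ofReal ((r ^ (-η) * ‖w r φ‖) ^ 2) ∂haarHalfLine) ^ (1/2 : ℝ)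

lemma aux_opt {a b : ℝ} (ha : 0 < a) (hb : 0 < b) (A B X : ENNReal) (hA : A ≠ ⊤) (hB : B ≠ ⊤)
    (h : ∀ R : ℝ, 0 < R → X ≤ ENNReal.ofReal (R ^ (-a)) * A + ENNReal.ofReal (R ^ b) * B) :
    X ≤ 2 * A ^ (b / (a + b)) * B ^ (a / (a + b)) := by
  have hab : 0 < a + b := by linarith
  rcases eq_or_ne A 0 with hA0 | hA0
  · have hX : X ≤ 0 := by
      refine ENNReal.le_of_forall_pos_le_add fun ε hε _ => ?_
      have hεR : (0:ℝ) < ε := hε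
      set M := B.toReal + 1 with hM
      have hMpos : 0 < M := by positivity
      set R := ((ε : ℝ) / M) ^ (1 / b) with hRdef
      have hRpos : 0 < R := Real.rpow_pos_of_pos (by positivity) _
      have hRb : R ^ b = (ε : ℝ) / M := by
        rw [hRdef, ← Real.rpow_mul (by positivity), one_div, inv_mul_cancel₀ hb.ne',
          Real.rpow_one]
      have hBle : B ≤ ENNReal.ofReal M := by
        calc B = ENNReal.ofReal B.toReal := (ENNReal.ofReal_toReal hB).symm
        _ ≤ _ := ENNReal.ofReal_le_ofReal (by simp [hM])
      have := h R hRpos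
      rw [hA0, mul_zero, zero_add] at this
      refine this.trans ?_
      rw [hRb, zero_add]
      calc ENNReal.ofReal ((ε:ℝ) / M) * B ≤ ENNReal.ofReal ((ε:ℝ) / M) * ENNReal.ofReal M :=
            mul_le_mul_right hBle _
      _ = ENNReal.ofReal ((ε:ℝ) / M * M) := (ENNReal.ofReal_mul (by positivity)).symm
      _ = ENNReal.ofReal (ε:ℝ) := by rw [div_mul_cancel₀ _ hMpos.ne']
      _ = (ε : ENNReal) := ENNReal.ofReal_coe_nnreal
    exact (le_zero_iff.mp hX).le.trans zero_le
  rcases eq_or_ne B 0 with hB0 | hB0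
  · have hX : X ≤ 0 := by
      refine ENNReal.le_of_forall_pos_le_add fun ε hε _ => ?_
      have hεR : (0:ℝ) < ε := hε
      set M := A.toReal + 1 with hM
      have hMpos : 0 < M := by positivity
      set R := (M / (ε : ℝ)) ^ (1 / a) with hRdef
      have hRpos : 0 < R := Real.rpow_pos_of_pos (by positivity) _
      have hRa : R ^ (-a) = (ε : ℝ) / M := by
        rw [hRdef, ← Real.rpow_mul (by positivity),
          show 1 / a * (-a) = -1 by field_simp, Real.rpow_neg_one, inv_div]
      have hAle : A ≤ ENNReal.ofReal M := by
        calc A = ENNReal.ofReal A.toReal := (ENNReal.ofReal_toReal hA).symm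
        _ ≤ _ := ENNReal.ofReal_le_ofReal (by simp [hM])
      have := h R hRpos
      rw [hB0, mul_zero, add_zero] at this
      refine this.trans ?_
      rw [hRa, zero_add]
      calc ENNReal.ofReal ((ε:ℝ) / M) * A ≤ ENNReal.ofReal ((ε:ℝ) / M) * ENNReal.ofReal M :=
            mul_le_mul_right hAle _
      _ = ENNReal.ofReal ((ε:ℝ) / M * M) := (ENNReal.ofReal_mul (by positivity)).symm
      _ = ENNReal.ofReal (ε:ℝ) := by rw [div_mul_cancel₀ _ hMpos.ne']
      _ = (ε : ENNReal) := ENNReal.ofReal_coe_nnreal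
    exact (le_zero_iff.mp hX).le.trans zero_le
  -- main case
  have hArp : 0 < A.toReal := ENNReal.toReal_pos hA0 hA
  have hBrp : 0 < B.toReal := ENNReal.toReal_pos hB0 hB
  set Ar := A.toReal with hAr
  set Br := B.toReal with hBr
  set R := (Ar / Br) ^ (1 / (a + b)) with hRdef
  have hRpos : 0 < R := Real.rpow_pos_of_pos (by positivity) _
  have hs1 : (1:ℝ) - a / (a + b) = b / (a + b) := by field_simp; ring
  have key1 : R ^ (-a) * Ar = Ar ^ (b / (a + b)) * Br ^ (a / (a + b)) := by
    rw [hRdef, ← Real.rpow_mul (by positivity),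
      show 1 / (a + b) * (-a) = -(a / (a + b)) by field_simp,
      Real.rpow_neg (by positivity), Real.div_rpow hArp.le hBrp.le, ← hs1,
      Real.rpow_sub hArp, Real.rpow_one]
    field_simp
  have key2 : R ^ b * Br = Ar ^ (b / (a + b)) * Br ^ (a / (a + b)) := by
    rw [hRdef, ← Real.rpow_mul (by positivity),
      show 1 / (a + b) * b = b / (a + b) by field_simp,
      Real.div_rpow hArp.le hBrp.le,
      show a / (a + b) = 1 - b / (a + b) by field_simp; ring,
      Real.rpow_sub hBrp, Real.rpow_one]
    field_simp
  have hAeq : A = ENNReal.ofReal Ar := (ENNReal.ofReal_toReal hA).symm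
  have hBeq : B = ENNReal.ofReal Br := (ENNReal.ofReal_toReal hB).symm
  have := h R hRpos
  rw [hAeq, hBeq, ← ENNReal.ofReal_mul (Real.rpow_nonneg hRpos.le _),
    ← ENNReal.ofReal_mul (Real.rpow_nonneg hRpos.le _), key1, key2] at this
  refine this.trans ?_
  have hP : ENNReal.ofReal (Ar ^ (b / (a + b)) * Br ^ (a / (a + b)))
      = A ^ (b / (a + b)) * B ^ (a / (a + b)) := by
    rw [ENNReal.ofReal_mul (Real.rpow_nonneg hArp.le _),
      ← ENNReal.ofReal_rpow_of_pos hArp, ← ENNReal.ofReal_rpow_of_pos hBrp, ← hAeq, ← hBeq]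
  rw [hP, ← two_mul, mul_assoc]

lemma aux_rpow_le_max {s t r e : ℝ} (hs : 0 < s) (h1 : s ≤ r) (h2 : r ≤ t) :
    r ^ e ≤ max (s ^ e) (t ^ e) := by
  rcases le_or_gt 0 e with he | he
  · exact le_max_of_le_right (Real.rpow_le_rpow (hs.le.trans h1) h2 he)
  · exact le_max_of_le_left (Real.rpow_le_rpow_of_nonpos hs h1 he.le)

lemma aux_min_le_rpow {s t r e : ℝ} (hs : 0 < s) (h1 : s ≤ r) (h2 : r ≤ t) :
    min (s ^ e) (t ^ e) ≤ r ^ e := by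
  rcases le_or_gt 0 e with he | he
  · exact min_le_of_left_le (Real.rpow_le_rpow hs.le h1 he)
  · exact min_le_of_right_le (Real.rpow_le_rpow_of_nonpos (hs.trans_le h1) h2 he.le)

lemma aux_rpow_cancel {r : ℝ} (hr : 0 < r) (e : ℝ) :
    r ^ (2 * e) * (r ^ (-e)) ^ 2 = 1 := by
  rw [← Real.rpow_natCast (r ^ (-e)) 2, ← Real.rpow_mul hr.le, ← Real.rpow_add hr,
    show 2 * e + -e * ((2:ℕ):ℝ) = 0 by push_cast; ring, Real.rpow_zero]

lemma aux_rpow_two {r : ℝ} (hr : 0 < r) (e : ℝ) :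
    r ^ (2 * e) = (r ^ e) ^ 2 := by
  rw [← Real.rpow_natCast (r ^ e) 2, ← Real.rpow_mul hr.le]
  norm_num [mul_comm]

lemma pointwise_aux (β₁ β β₂ R r : ℝ) (hr : 0 < r) (hh1 : R / 2 ≤ r) (hh2 : r ≤ R)
    (x y z : ℝ) (hx : 0 ≤ x) (hy : 0 ≤ y) (hz : 0 ≤ z)
    (htri : z * r ^ β ≤ x + y) :
    z ^ 2 * min ((R / 2) ^ (2 * β)) (R ^ (2 * β)) ≤
      2 * max ((R / 2) ^ (2 * β₁)) (R ^ (2 * β₁)) * (r ^ (-β₁) * x) ^ 2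
        + 2 * max ((R / 2) ^ (2 * β₂)) (R ^ (2 * β₂)) * (r ^ (-β₂) * y) ^ 2 := by
  have hR : 0 < R := hr.trans_le hh2
  have hR2 : 0 < R / 2 := half_pos hR
  have hmin : min ((R / 2) ^ (2 * β)) (R ^ (2 * β)) ≤ r ^ (2 * β) :=
    aux_min_le_rpow hR2 hh1 hh2
  have hM1 : r ^ (2 * β₁) ≤ max ((R / 2) ^ (2 * β₁)) (R ^ (2 * β₁)) :=
    aux_rpow_le_max hR2 hh1 hh2
  have hM2 : r ^ (2 * β₂) ≤ max ((R / 2) ^ (2 * β₂)) (R ^ (2 * β₂)) :=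
    aux_rpow_le_max hR2 hh1 hh2
  have hp1 : r ^ (2 * β₁) * (r ^ (-β₁)) ^ 2 = 1 := aux_rpow_cancel hr β₁
  have hp2 : r ^ (2 * β₂) * (r ^ (-β₂)) ^ 2 = 1 := aux_rpow_cancel hr β₂
  have hzz : z ^ 2 * r ^ (2 * β) = (z * r ^ β) ^ 2 := by
    rw [aux_rpow_two hr β]; ring
  have hzb : 0 ≤ z * r ^ β := mul_nonneg hz (Real.rpow_nonneg hr.le β)
  have hsq : (z * r ^ β) ^ 2 ≤ 2 * x ^ 2 + 2 * y ^ 2 := by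
    nlinarith [sq_nonneg (x - y), mul_self_le_mul_self hzb htri]
  have e1 : x ^ 2 = r ^ (2 * β₁) * (r ^ (-β₁) * x) ^ 2 := by
    rw [mul_pow, ← mul_assoc, hp1, one_mul]
  have e2 : y ^ 2 = r ^ (2 * β₂) * (r ^ (-β₂) * y) ^ 2 := by
    rw [mul_pow, ← mul_assoc, hp2, one_mul]
  nlinarith [sq_nonneg (r ^ (-β₁) * x), sq_nonneg (r ^ (-β₂) * y), sq_nonneg z,
    mul_le_mul_of_nonneg_left hmin (sq_nonneg z),
    mul_le_mul_of_nonneg_right hM1 (sq_nonneg (r ^ (-β₁) * x)),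
    mul_le_mul_of_nonneg_right hM2 (sq_nonneg (r ^ (-β₂) * y))]

noncomputable def kconst (η β : ℝ) : ℝ :=
  4 * max ((1 / 2 : ℝ) ^ (2 * η)) 1 * (min ((1 / 2 : ℝ) ^ (2 * β)) 1)⁻¹

lemma kconst_pos (η β : ℝ) : 0 < kconst η β := by
  unfold kconst
  have h1 : (0:ℝ) < (1/2:ℝ) ^ (2*η) := Real.rpow_pos_of_pos (by norm_num) _
  have h2 : (0:ℝ) < (1/2:ℝ) ^ (2*β) := Real.rpow_pos_of_pos (by norm_num) _
  have := lt_min h2 one_pos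
  positivity

instance : SFinite haarHalfLine := by
  unfold haarHalfLine; infer_instance

lemma aux_measure_annulus {R : ℝ} (hR : 0 < R) :
    ENNReal.ofReal (1 / 2) ≤ haarHalfLine (Ioo (R / 2) R) := by
  have hsub : Ioo (R / 2) R ⊆ Ioi (0:ℝ) := fun x hx => (half_pos hR).trans hx.1
  have happ : haarHalfLine (Ioo (R / 2) R)
      = ∫⁻ r in Ioo (R / 2) R, ENNReal.ofReal r⁻¹ ∂(volume.restrict (Ioi (0:ℝ))) :=
    withDensity_apply _ measurableSet_Ioo
  rw [happ, Measure.restrict_restrict measurableSet_Ioo,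
    inter_eq_self_of_subset_left hsub]
  calc ENNReal.ofReal (1/2)
      = ENNReal.ofReal R⁻¹ * volume (Ioo (R/2) R) := by
        rw [Real.volume_Ioo, ← ENNReal.ofReal_mul (by positivity)]
        congr 1
        field_simp
        ring
    _ = ∫⁻ _ in Ioo (R/2) R, ENNReal.ofReal R⁻¹ ∂volume := (setLIntegral_const _ _).symm
    _ ≤ ∫⁻ r in Ioo (R/2) R, ENNReal.ofReal r⁻¹ ∂volume := by
        refine setLIntegral_mono' measurableSet_Ioo fun r hr => ?_
        exact ENNReal.ofReal_le_ofReal (inv_anti₀ ((half_pos hR).trans hr.1) hr.2.le)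

lemma aux_coeff (η β R : ℝ) (hR : 0 < R) :
    2 * (min ((R / 2) ^ (2 * β)) (R ^ (2 * β)))⁻¹ * (2 * max ((R / 2) ^ (2 * η)) (R ^ (2 * η)))
      = kconst η β * R ^ (2 * η - 2 * β) := by
  have hmax : max ((R / 2) ^ (2 * η)) (R ^ (2 * η)) = R ^ (2 * η) * max ((1/2:ℝ) ^ (2 * η)) 1 := by
    rw [show R / 2 = R * (1/2 : ℝ) by ring, Real.mul_rpow hR.le (by norm_num),
      mul_max_of_nonneg _ _ (Real.rpow_nonneg hR.le _), mul_one]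
  have hmin : min ((R / 2) ^ (2 * β)) (R ^ (2 * β)) = R ^ (2 * β) * min ((1/2:ℝ) ^ (2 * β)) 1 := by
    rw [show R / 2 = R * (1/2 : ℝ) by ring, Real.mul_rpow hR.le (by norm_num),
      mul_min_of_nonneg _ _ (Real.rpow_nonneg hR.le _), mul_one]
  have h1 : (0:ℝ) < (1/2:ℝ) ^ (2*η) := Real.rpow_pos_of_pos (by norm_num) _
  have h2 : (0:ℝ) < min ((1/2:ℝ) ^ (2*β)) 1 := lt_min (Real.rpow_pos_of_pos (by norm_num) _) one_pos
  have h3 : (0:ℝ) < R ^ (2*β) := Real.rpow_pos_of_pos hR _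
  have h4 : (0:ℝ) < R ^ (2*η) := Real.rpow_pos_of_pos hR _
  rw [hmax, hmin, kconst, Real.rpow_sub hR]
  field_simp
  ring

lemma key_phi (β₁ β β₂ : ℝ) {R : ℝ} (hR : 0 < R) (w : ℝ → ℂ) (hw : Measurable w) (a : ℂ) :
    ENNReal.ofReal (‖a‖ ^ 2) ≤
      ENNReal.ofReal (kconst β₁ β * R ^ (2 * β₁ - 2 * β)) *
        (∫⁻ r, ENNReal.ofReal ((r ^ (-β₁) * ‖w r‖) ^ 2) ∂haarHalfLine)
      + ENNReal.ofReal (kconst β₂ β * R ^ (2 * β₂ - 2 * β)) *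
        (∫⁻ r, ENNReal.ofReal ((r ^ (-β₂) * ‖w r - a * (r:ℂ) ^ (β:ℂ)‖) ^ 2)
          ∂haarHalfLine) := by
  set μ := haarHalfLine with hμdef
  set m := min ((R / 2) ^ (2 * β)) (R ^ (2 * β)) with hmdef
  set M₁ := max ((R / 2) ^ (2 * β₁)) (R ^ (2 * β₁)) with hM1def
  set M₂ := max ((R / 2) ^ (2 * β₂)) (R ^ (2 * β₂)) with hM2def
  have hR2 : 0 < R / 2 := half_pos hR
  have hm : 0 < m := lt_min (Real.rpow_pos_of_pos hR2 _) (Real.rpow_pos_of_pos hR _)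
  have hM1 : 0 < M₁ := lt_max_of_lt_left (Real.rpow_pos_of_pos hR2 _)
  have hM2 : 0 < M₂ := lt_max_of_lt_left (Real.rpow_pos_of_pos hR2 _)
  set h1 : ℝ → ENNReal := fun r => ENNReal.ofReal ((r ^ (-β₁) * ‖w r‖) ^ 2)
    with hh1def
  set h2 : ℝ → ENNReal :=
    fun r => ENNReal.ofReal ((r ^ (-β₂) * ‖w r - a * (r:ℂ) ^ (β:ℂ)‖) ^ 2) with hh2def
  have hmeas1 : Measurable h1 := by
    apply Measurable.ennreal_ofReal
    exact ((measurable_id.pow measurable_const).mul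
      (continuous_norm.measurable.comp hw)).pow_const 2
  -- pointwise inequality on the annulus
  have hptw : ∀ r ∈ Ioo (R / 2) R,
      ENNReal.ofReal (‖a‖ ^ 2 * m) ≤
        ENNReal.ofReal (2 * M₁) * h1 r + ENNReal.ofReal (2 * M₂) * h2 r := by
    intro r hr
    have hrpos : 0 < r := hR2.trans hr.1
    have habs : ‖a * (r:ℂ) ^ (β:ℂ)‖ = ‖a‖ * r ^ β := by
      rw [norm_mul, Complex.norm_cpow_eq_rpow_re_of_pos hrpos]
      norm_num
    have htri : ‖a‖ * r ^ β ≤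
        ‖w r‖ + ‖w r - a * (r:ℂ) ^ (β:ℂ)‖ := by
      rw [← habs]
      calc ‖a * (r:ℂ) ^ (β:ℂ)‖
          = ‖w r - (w r - a * (r:ℂ) ^ (β:ℂ))‖ := by ring_nf
        _ ≤ _ := by
            simpa using
              norm_sub_le (w r) (w r - a * (r:ℂ) ^ (β:ℂ))
    have := pointwise_aux β₁ β β₂ R r hrpos hr.1.le hr.2.le
      (‖w r‖) (‖w r - a * (r:ℂ) ^ (β:ℂ)‖) (‖a‖)
      (norm_nonneg _) (norm_nonneg _) (norm_nonneg _) htri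
    rw [hh1def, hh2def]
    rw [← ENNReal.ofReal_mul (by positivity), ← ENNReal.ofReal_mul (by positivity),
      ← ENNReal.ofReal_add (by positivity) (by positivity)]
    exact ENNReal.ofReal_le_ofReal this
  -- integrate over the annulus
  have hchain : ENNReal.ofReal (‖a‖ ^ 2 * m) * ENNReal.ofReal (1 / 2) ≤
      ENNReal.ofReal (2 * M₁) * (∫⁻ r, h1 r ∂μ) + ENNReal.ofReal (2 * M₂) * (∫⁻ r, h2 r ∂μ) := by
    calc ENNReal.ofReal (‖a‖ ^ 2 * m) * ENNReal.ofReal (1 / 2)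
        ≤ ENNReal.ofReal (‖a‖ ^ 2 * m) * μ (Ioo (R / 2) R) :=
          mul_le_mul_right (aux_measure_annulus hR) _
      _ = ∫⁻ _ in Ioo (R / 2) R, ENNReal.ofReal (‖a‖ ^ 2 * m) ∂μ :=
          (setLIntegral_const _ _).symm
      _ ≤ ∫⁻ r in Ioo (R / 2) R,
            (ENNReal.ofReal (2 * M₁) * h1 r + ENNReal.ofReal (2 * M₂) * h2 r) ∂μ :=
          setLIntegral_mono' measurableSet_Ioo hptw
      _ = (∫⁻ r in Ioo (R / 2) R, ENNReal.ofReal (2 * M₁) * h1 r ∂μ)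
            + ∫⁻ r in Ioo (R / 2) R, ENNReal.ofReal (2 * M₂) * h2 r ∂μ :=
          lintegral_add_left' ((hmeas1.const_mul _).aemeasurable) _
      _ = ENNReal.ofReal (2 * M₁) * (∫⁻ r in Ioo (R / 2) R, h1 r ∂μ)
            + ENNReal.ofReal (2 * M₂) * ∫⁻ r in Ioo (R / 2) R, h2 r ∂μ := by
          rw [lintegral_const_mul' _ _ ENNReal.ofReal_ne_top,
            lintegral_const_mul' _ _ ENNReal.ofReal_ne_top]
      _ ≤ _ := add_le_add
          (mul_le_mul_right (setLIntegral_le_lintegral _ _) _)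
          (mul_le_mul_right (setLIntegral_le_lintegral _ _) _)
  -- rescale
  have hstart : ENNReal.ofReal (‖a‖ ^ 2)
      = ENNReal.ofReal (2 * m⁻¹) * (ENNReal.ofReal (‖a‖ ^ 2 * m) * ENNReal.ofReal (1 / 2)) := by
    rw [← ENNReal.ofReal_mul (by positivity), ← ENNReal.ofReal_mul (by positivity)]
    congr 1
    field_simp
  calc ENNReal.ofReal (‖a‖ ^ 2)
      = ENNReal.ofReal (2 * m⁻¹) * (ENNReal.ofReal (‖a‖ ^ 2 * m) * ENNReal.ofReal (1 / 2)) := hstart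
    _ ≤ ENNReal.ofReal (2 * m⁻¹) *
          (ENNReal.ofReal (2 * M₁) * (∫⁻ r, h1 r ∂μ) + ENNReal.ofReal (2 * M₂) * (∫⁻ r, h2 r ∂μ)) :=
        mul_le_mul_right hchain _
    _ = ENNReal.ofReal (2 * m⁻¹ * (2 * M₁)) * (∫⁻ r, h1 r ∂μ)
          + ENNReal.ofReal (2 * m⁻¹ * (2 * M₂)) * (∫⁻ r, h2 r ∂μ) := by
        rw [mul_add, ← mul_assoc, ← mul_assoc,
          ← ENNReal.ofReal_mul (by positivity), ← ENNReal.ofReal_mul (by positivity)]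
    _ = _ := by
        rw [hmdef, hM1def, hM2def, aux_coeff β₁ β R hR, aux_coeff β₂ β R hR]

lemma rpow_half_comm (x : ENNReal) (p : ℝ) : (x ^ p) ^ (1/2 : ℝ) = (x ^ (1/2 : ℝ)) ^ p := by
  rw [← ENNReal.rpow_mul, ← ENNReal.rpow_mul, mul_comm]

theorem stmt_8 (β₁ β β₂ : ℝ) (h1 : β₁ < β) (h2 : β < β₂) :
    ∃ C : ENNReal, C ≠ ⊤ ∧ ∀ (θ : ℝ), 0 < θ → θ < 2 * Real.pi →
      ∀ (v : ℝ → ℝ → ℂ) (c : ℝ → ℂ), Measurable (Function.uncurry v) → Measurable c →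
        wedgeNorm θ v β₁ ≠ ⊤ →
        wedgeNorm θ (fun r φ => v r φ - c φ * (r : ℂ) ^ (β : ℂ)) β₂ ≠ ⊤ →
        (∫⁻ φ in Set.Ioo (0 : ℝ) θ, ENNReal.ofReal (‖c φ‖ ^ 2)) ^ (1/2 : ℝ)
          ≤ C * wedgeNorm θ v β₁ ^ ((β₂ - β) / (β₂ - β₁)) *
              wedgeNorm θ (fun r φ => v r φ - c φ * (r : ℂ) ^ (β : ℂ)) β₂
                ^ ((β - β₁) / (β₂ - β₁)) := by
  set p : ℝ := (β₂ - β) / (β₂ - β₁) with hpdef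
  set q : ℝ := (β - β₁) / (β₂ - β₁) with hqdef
  have hp0 : 0 ≤ p := by
    apply div_nonneg <;> linarith
  have hq0 : 0 ≤ q := by
    apply div_nonneg <;> linarith
  set K₁ : ENNReal := ENNReal.ofReal (kconst β₁ β) with hK1def
  set K₂ : ENNReal := ENNReal.ofReal (kconst β₂ β) with hK2def
  refine ⟨(2:ENNReal) ^ (1/2:ℝ) * (K₁ ^ (1/2:ℝ)) ^ p * (K₂ ^ (1/2:ℝ)) ^ q, ?_, ?_⟩
  · refine ENNReal.mul_ne_top (ENNReal.mul_ne_top ?_ ?_) ?_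
    · exact ENNReal.rpow_ne_top_of_nonneg (by norm_num) (by simp)
    · exact ENNReal.rpow_ne_top_of_nonneg hp0
        (ENNReal.rpow_ne_top_of_nonneg (by norm_num) ENNReal.ofReal_ne_top)
    · exact ENNReal.rpow_ne_top_of_nonneg hq0
        (ENNReal.rpow_ne_top_of_nonneg (by norm_num) ENNReal.ofReal_ne_top)
  intro θ hθ hθ2 v c hv hc hAfin hBfin
  set fInt : ℝ → ENNReal := fun φ =>
    ∫⁻ r, ENNReal.ofReal ((r ^ (-β₁) * ‖v r φ‖) ^ 2) ∂haarHalfLine with hfIntdef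
  set gInt : ℝ → ENNReal := fun φ =>
    ∫⁻ r, ENNReal.ofReal ((r ^ (-β₂) *
      ‖v r φ - c φ * (r:ℂ) ^ (β:ℂ)‖) ^ 2) ∂haarHalfLine with hgIntdef
  set F : ENNReal := ∫⁻ φ in Set.Ioo (0:ℝ) θ, fInt φ with hFdef
  set G : ENNReal := ∫⁻ φ in Set.Ioo (0:ℝ) θ, gInt φ with hGdef
  set X : ENNReal := ∫⁻ φ in Set.Ioo (0:ℝ) θ, ENNReal.ofReal (‖c φ‖ ^ 2) with hXdef
  have hwA : wedgeNorm θ v β₁ = F ^ (1/2:ℝ) := rfl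
  have hwB : wedgeNorm θ (fun r φ => v r φ - c φ * (r : ℂ) ^ (β : ℂ)) β₂ = G ^ (1/2:ℝ) := rfl
  have hF : F ≠ ⊤ := by
    intro hF
    apply hAfin
    rw [hwA, hF, ENNReal.top_rpow_of_pos (by norm_num)]
  have hG : G ≠ ⊤ := by
    intro hG
    apply hBfin
    rw [hwB, hG, ENNReal.top_rpow_of_pos (by norm_num)]
  have hFmeas : Measurable fInt := by
    have hj : Measurable fun pr : ℝ × ℝ =>
        ENNReal.ofReal ((pr.2 ^ (-β₁) * ‖v pr.2 pr.1‖) ^ 2) := by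
      refine Measurable.ennreal_ofReal ?_
      exact ((measurable_snd.pow measurable_const).mul
        (continuous_norm.measurable.comp (hv.comp measurable_swap))).pow_const 2
    exact hj.lintegral_prod_right'
  -- the key inequality for every radius
  have hkey : ∀ R : ℝ, 0 < R →
      X ≤ ENNReal.ofReal (R ^ (-(2*β - 2*β₁))) * (K₁ * F)
          + ENNReal.ofReal (R ^ (2*β₂ - 2*β)) * (K₂ * G) := by
    intro R hR
    have step1 : X ≤ ∫⁻ φ in Set.Ioo (0:ℝ) θ,
        (ENNReal.ofReal (kconst β₁ β * R ^ (2*β₁ - 2*β)) * fInt φ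
          + ENNReal.ofReal (kconst β₂ β * R ^ (2*β₂ - 2*β)) * gInt φ) := by
      refine lintegral_mono fun φ => ?_
      exact key_phi β₁ β β₂ hR (fun r => v r φ)
        (hv.comp (measurable_id.prodMk measurable_const)) (c φ)
    have step2 : (∫⁻ φ in Set.Ioo (0:ℝ) θ,
        (ENNReal.ofReal (kconst β₁ β * R ^ (2*β₁ - 2*β)) * fInt φ
          + ENNReal.ofReal (kconst β₂ β * R ^ (2*β₂ - 2*β)) * gInt φ))
        = ENNReal.ofReal (kconst β₁ β * R ^ (2*β₁ - 2*β)) * F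
          + ENNReal.ofReal (kconst β₂ β * R ^ (2*β₂ - 2*β)) * G := by
      rw [lintegral_add_left' ((hFmeas.const_mul _).aemeasurable),
        lintegral_const_mul' _ _ ENNReal.ofReal_ne_top,
        lintegral_const_mul' _ _ ENNReal.ofReal_ne_top]
    refine (step1.trans_eq step2).trans_eq ?_
    rw [ENNReal.ofReal_mul (kconst_pos β₁ β).le, ENNReal.ofReal_mul (kconst_pos β₂ β).le,
      show 2*β₁ - 2*β = -(2*β - 2*β₁) by ring]
    ring
  have hopt := aux_opt (a := 2*β - 2*β₁) (b := 2*β₂ - 2*β) (by linarith) (by linarith)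
    (K₁ * F) (K₂ * G) X (ENNReal.mul_ne_top ENNReal.ofReal_ne_top hF)
    (ENNReal.mul_ne_top ENNReal.ofReal_ne_top hG) hkey
  have he1 : (2*β₂ - 2*β) / ((2*β - 2*β₁) + (2*β₂ - 2*β)) = p := by
    rw [hpdef, div_eq_div_iff (by linarith) (by linarith)]
    ring
  have he2 : (2*β - 2*β₁) / ((2*β - 2*β₁) + (2*β₂ - 2*β)) = q := by
    rw [hqdef, div_eq_div_iff (by linarith) (by linarith)]
    ring
  rw [he1, he2] at hopt
  have hXh : X ^ (1/2:ℝ) ≤ (2 * (K₁ * F) ^ p * (K₂ * G) ^ q) ^ (1/2:ℝ) :=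
    ENNReal.rpow_le_rpow hopt (by norm_num)
  rw [hwA, hwB]
  refine hXh.trans_eq ?_
  rw [ENNReal.mul_rpow_of_nonneg _ _ (by norm_num : (0:ℝ) ≤ 1/2),
    ENNReal.mul_rpow_of_nonneg _ _ (by norm_num : (0:ℝ) ≤ 1/2),
    rpow_half_comm ((K₁ * F)) p, rpow_half_comm ((K₂ * G)) q,
    ENNReal.mul_rpow_of_nonneg K₁ F (by norm_num : (0:ℝ) ≤ 1/2),
    ENNReal.mul_rpow_of_nonneg K₂ G (by norm_num : (0:ℝ) ≤ 1/2),
    ENNReal.mul_rpow_of_nonneg _ _ hp0, ENNReal.mul_rpow_of_nonneg _ _ hq0]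
  ring
end

section
/- Let α₀ > 0, α₁ ∈ (0, π/2], θ > 0, and let f, g ∈ {sin, cos} (complex). Let λ ∈ ℂ satisfy θ|Re λ| ≤ α₀ and dist(θ|Re λ|, g^{-1}({0}) ∩ ℝ) ≥ α₁. Then 0 < sin(α₁) ≤ |g(λθ)| ≤ cosh(θ Im λ). -/
open Real

-- core: sin α₁ ≤ sin |u| = |sin u|
lemma core (α₁ u : ℝ) (h0 : 0 < α₁) (h2 : α₁ ≤ |u|) (h3 : |u| ≤ π / 2) :
    Real.sin α₁ ≤ |Real.sin u| := by
  have h4 : |Real.sin u| = Real.sin |u| := by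
    rcases abs_cases u with ⟨h, _⟩ | ⟨h, _⟩
    · rw [h, abs_of_nonneg (Real.sin_nonneg_of_nonneg_of_le_pi (h ▸ abs_nonneg u)
        (by linarith [Real.pi_pos]))]
    · rw [h, Real.sin_neg]
      rw [abs_of_nonpos (by
        have : Real.sin (-u) ≥ 0 := Real.sin_nonneg_of_nonneg_of_le_pi
          (by linarith [abs_nonneg u]) (by linarith [Real.pi_pos, abs_nonneg u])
        rw [Real.sin_neg] at this; linarith)]
  rw [h4]
  exact Real.strictMonoOn_sin.monotoneOn ⟨by linarith, by linarith⟩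
    ⟨by linarith [abs_nonneg u, Real.pi_pos], h3⟩ h2

lemma sinLB (α₁ t : ℝ) (h0 : 0 < α₁) (h : ∀ n : ℤ, α₁ ≤ |t - n * π|) :
    Real.sin α₁ ≤ |Real.sin t| := by
  set n : ℤ := round (t / π) with hn
  have hπ := Real.pi_pos
  have hu : |t - n * π| ≤ π / 2 := by
    have h1 := abs_sub_round (t / π)
    have h2 : t - n * π = (t / π - n) * π := by field_simp
    rw [h2, abs_mul, abs_of_pos hπ]
    nlinarith
  have := core α₁ (t - n * π) h0 (h n) hu
  have heq : Real.sin (t - n * π) = (-1) ^ n * Real.sin t := Real.sin_sub_int_mul_pi t n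
  rw [heq, abs_mul] at this
  rcases Int.even_or_odd n with he | ho
  · rw [he.neg_one_zpow] at this; simpa using this
  · rw [Odd.neg_one_zpow ho] at this; simpa using this

lemma cosLB (α₁ t : ℝ) (h0 : 0 < α₁) (h : ∀ n : ℤ, α₁ ≤ |t - (π / 2 + n * π)|) :
    Real.sin α₁ ≤ |Real.cos t| := by
  have h' : ∀ n : ℤ, α₁ ≤ |t - π / 2 - n * π| := by
    intro n; have := h n; rw [sub_sub]; exact this
  have := sinLB α₁ (t - π / 2) h0 h'
  rwa [show t - π / 2 = -(π/2 - t) by ring, Real.sin_neg, abs_neg, Real.sin_pi_div_two_sub] at this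

lemma bnd (s a b y : ℝ) (h1 : s ≤ |a|) (hab : a ^ 2 + b ^ 2 = 1) :
    s ≤ Real.sqrt ((a * Real.cosh y) ^ 2 + (b * Real.sinh y) ^ 2) ∧
      Real.sqrt ((a * Real.cosh y) ^ 2 + (b * Real.sinh y) ^ 2) ≤ Real.cosh y := by
  have hc1 := Real.one_le_cosh y
  have hc2 := Real.cosh_sq y
  constructor
  · refine le_trans h1 ?_
    rw [show |a| = Real.sqrt (a ^ 2) by rw [Real.sqrt_sq_eq_abs]]
    apply Real.sqrt_le_sqrt
    nlinarith [sq_nonneg (b * Real.sinh y), sq_nonneg a]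
  · refine le_trans (Real.sqrt_le_sqrt (y := Real.cosh y ^ 2) ?_)
      (le_of_eq (Real.sqrt_sq (Real.cosh_pos y).le))
    nlinarith [sq_nonneg (Real.sinh y), sq_nonneg a, sq_nonneg b]

theorem stmt_10 (α₀ α₁ θ : ℝ) (hα₀ : 0 < α₀) (hα₁ : α₁ ∈ Set.Ioc 0 (Real.pi / 2))
    (hθ : 0 < θ) (g : ℂ → ℂ) (hg : g = Complex.sin ∨ g = Complex.cos)
    (lam : ℂ) (hre : θ * |lam.re| ≤ α₀)
    (hdist : ∀ x : ℝ, g x = 0 → α₁ ≤ |θ * |lam.re| - x|) :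
    0 < Real.sin α₁ ∧ Real.sin α₁ ≤ ‖g (lam * θ)‖ ∧
      ‖g (lam * θ)‖ ≤ Real.cosh (θ * lam.im) := by
  obtain ⟨hα₁0, hα₁2⟩ := hα₁
  have hπ := Real.pi_pos
  have hpos : 0 < Real.sin α₁ :=
    Real.sin_pos_of_pos_of_lt_pi hα₁0 (by linarith)
  set x : ℝ := (lam * (θ:ℂ)).re with hxdef
  set y : ℝ := (lam * (θ:ℂ)).im with hydef
  have hx : x = lam.re * θ := by simp [hxdef, Complex.mul_re]
  have hy : y = lam.im * θ := by simp [hydef, Complex.mul_im]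
  set t : ℝ := θ * |lam.re| with htdef
  have hxt : |x| = t := by
    rw [hx, htdef, abs_mul, abs_of_pos hθ]; ring
  have hsinabs : |Real.sin x| = |Real.sin t| := by
    rw [← hxt]
    rcases abs_cases x with ⟨h, _⟩ | ⟨h, _⟩
    · rw [h]
    · rw [h, Real.sin_neg, abs_neg]
  have hcosabs : |Real.cos x| = |Real.cos t| := by
    rw [← hxt]
    rcases abs_cases x with ⟨h, _⟩ | ⟨h, _⟩
    · rw [h]
    · rw [h, Real.cos_neg]
  have hcy : Real.cosh (θ * lam.im) = Real.cosh y := by rw [hy, mul_comm]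
  have key : Real.sin α₁ ≤ |Real.sin x| ∧ ‖g (lam * θ)‖ =
      Real.sqrt ((Real.sin x * Real.cosh y) ^ 2 + (Real.cos x * Real.sinh y) ^ 2) ∨
      Real.sin α₁ ≤ |Real.cos x| ∧ ‖g (lam * θ)‖ =
      Real.sqrt ((Real.cos x * Real.cosh y) ^ 2 + (Real.sin x * Real.sinh y) ^ 2) := by
    rcases hg with hg | hg
    · left
      constructor
      · rw [hsinabs]
        refine sinLB α₁ t hα₁0 fun n => ?_
        refine hdist (n * Real.pi) ?_
        rw [hg]
        rw [show ((n * Real.pi : ℝ) : ℂ) = ((n : ℂ) * (Real.pi : ℂ)) by push_cast; ring]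
        exact Complex.sin_int_mul_pi n
      · rw [hg, Complex.sin_eq, ← hxdef, ← hydef]
        rw [← Complex.ofReal_sin, ← Complex.ofReal_cos, ← Complex.ofReal_cosh,
          ← Complex.ofReal_sinh, ← Complex.ofReal_mul, ← Complex.ofReal_mul,
          Complex.norm_add_mul_I]
    · right
      constructor
      · rw [hcosabs]
        refine cosLB α₁ t hα₁0 fun n => ?_
        refine hdist (Real.pi / 2 + n * Real.pi) ?_
        rw [hg, ← Complex.ofReal_cos, Real.cos_add_int_mul_pi, Real.cos_pi_div_two,
          mul_zero, Complex.ofReal_zero]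
      · rw [hg, Complex.cos_eq, ← hxdef, ← hydef, sub_eq_add_neg, ← neg_mul]
        rw [← Complex.ofReal_sin, ← Complex.ofReal_cos, ← Complex.ofReal_cosh,
          ← Complex.ofReal_sinh, ← Complex.ofReal_mul, ← Complex.ofReal_mul,
          ← Complex.ofReal_neg, Complex.norm_add_mul_I]
        norm_num
  rcases key with ⟨h1, heq⟩ | ⟨h1, heq⟩
  · have := bnd (Real.sin α₁) (Real.sin x) (Real.cos x) y h1 (Real.sin_sq_add_cos_sq x)
    exact ⟨hpos, heq ▸ this.1, by rw [heq, hcy]; exact this.2⟩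
  · have := bnd (Real.sin α₁) (Real.cos x) (Real.sin x) y h1
      (by rw [add_comm]; exact Real.sin_sq_add_cos_sq x)
    exact ⟨hpos, heq ▸ this.1, by rw [heq, hcy]; exact this.2⟩
end

section
/- Let α₀ > 0, α₁ ∈ (0, π/2], θ > 0, f, g ∈ {sin, cos}, and λ ∈ ℂ \ {0} with θ|Re λ| ≤ α₀ and dist(θ|Re λ|, real zero set of g) ≥ α₁. Then |λ| ∫₀^θ |f(λφ)|²/|g(λθ)|² dφ ≤ max{ 2α₀ cosh²(α₀)/sin²(α₁), (α₀ + sinh(α₀) cosh(α₀))/sinh²(α₀) }. -/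
open Real

lemma aux_abs_sin_sq (x y : ℝ) :
    ‖Complex.sin (x + y * Complex.I)‖ ^ 2
      = Real.sin x ^ 2 * Real.cosh y ^ 2 + Real.cos x ^ 2 * Real.sinh y ^ 2 := by
  rw [Complex.sin_add_mul_I, ← Complex.ofReal_sin, ← Complex.ofReal_cos,
    ← Complex.ofReal_sinh, ← Complex.ofReal_cosh, ← Complex.ofReal_mul, ← Complex.ofReal_mul,
    Complex.sq_norm, Complex.normSq_add_mul_I]
  ring

lemma aux_abs_cos_sq (x y : ℝ) :
    ‖Complex.cos (x + y * Complex.I)‖ ^ 2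
      = Real.cos x ^ 2 * Real.cosh y ^ 2 + Real.sin x ^ 2 * Real.sinh y ^ 2 := by
  rw [Complex.cos_add_mul_I, ← Complex.ofReal_sin, ← Complex.ofReal_cos,
    ← Complex.ofReal_sinh, ← Complex.ofReal_cosh, ← Complex.ofReal_mul, ← Complex.ofReal_mul,
    sub_eq_add_neg, ← neg_mul, ← Complex.ofReal_neg,
    Complex.sq_norm, Complex.normSq_add_mul_I]
  ring

-- upper bound
lemma aux_upper (f : ℂ → ℂ) (hf : f = Complex.sin ∨ f = Complex.cos) (z : ℂ) :
    ‖f z‖ ^ 2 ≤ Real.cosh z.im ^ 2 := by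
  have hz : z = (z.re : ℂ) + (z.im : ℂ) * Complex.I := (Complex.re_add_im z).symm
  have h1 := Real.sin_sq_add_cos_sq z.re
  have h2 := Real.cosh_sq z.im
  rcases hf with rfl | rfl
  · conv_lhs => rw [hz, aux_abs_sin_sq]
    nlinarith [sq_nonneg (Real.sin z.re), sq_nonneg (Real.cos z.re),
      sq_nonneg (Real.sinh z.im), sq_nonneg (Real.cosh z.im)]
  · conv_lhs => rw [hz, aux_abs_cos_sq]
    nlinarith [sq_nonneg (Real.sin z.re), sq_nonneg (Real.cos z.re),
      sq_nonneg (Real.sinh z.im), sq_nonneg (Real.cosh z.im)]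

-- lower bound by sinh of imaginary part
lemma aux_lower_sinh (g : ℂ → ℂ) (hg : g = Complex.sin ∨ g = Complex.cos) (z : ℂ) :
    Real.sinh z.im ^ 2 ≤ ‖g z‖ ^ 2 := by
  have hz : z = (z.re : ℂ) + (z.im : ℂ) * Complex.I := (Complex.re_add_im z).symm
  have h1 := Real.sin_sq_add_cos_sq z.re
  have h2 := Real.cosh_sq z.im
  rcases hg with rfl | rfl
  · conv_rhs => rw [hz, aux_abs_sin_sq]
    nlinarith [sq_nonneg (Real.sin z.re), sq_nonneg (Real.cos z.re),
      sq_nonneg (Real.sinh z.im)]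
  · conv_rhs => rw [hz, aux_abs_cos_sq]
    nlinarith [sq_nonneg (Real.sin z.re), sq_nonneg (Real.cos z.re),
      sq_nonneg (Real.sinh z.im)]

-- lower bound by trig of real part (g = sin case)
lemma aux_lower_re_sin (z : ℂ) :
    Real.sin z.re ^ 2 ≤ ‖Complex.sin z‖ ^ 2 := by
  have hz : z = (z.re : ℂ) + (z.im : ℂ) * Complex.I := (Complex.re_add_im z).symm
  have h2 := Real.cosh_sq z.im
  conv_rhs => rw [hz, aux_abs_sin_sq]
  nlinarith [sq_nonneg (Real.sin z.re), sq_nonneg (Real.cos z.re), sq_nonneg (Real.sinh z.im)]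

lemma aux_lower_re_cos (z : ℂ) :
    Real.cos z.re ^ 2 ≤ ‖Complex.cos z‖ ^ 2 := by
  have hz : z = (z.re : ℂ) + (z.im : ℂ) * Complex.I := (Complex.re_add_im z).symm
  have h2 := Real.cosh_sq z.im
  conv_rhs => rw [hz, aux_abs_cos_sq]
  nlinarith [sq_nonneg (Real.sin z.re), sq_nonneg (Real.cos z.re), sq_nonneg (Real.sinh z.im)]

-- sin |t| = |sin t| for |t| ≤ π
lemma aux_abs_sin (t : ℝ) (ht : |t| ≤ π) : |Real.sin t| = Real.sin |t| := by
  rcases le_or_gt 0 t with h | h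
  · rw [abs_of_nonneg h, abs_of_nonneg (Real.sin_nonneg_of_nonneg_of_le_pi h (by rwa [abs_of_nonneg h] at ht))]
  · rw [abs_of_neg h, Real.sin_neg]
    rw [abs_of_nonpos]
    apply Real.sin_nonpos_of_nonpos_of_neg_pi_le h.le
    rw [abs_of_neg h] at ht; linarith

lemma aux_sin_lb (t α₁ : ℝ) (h0 : 0 < α₁) (h1 : α₁ ≤ |t|) (h2 : |t| ≤ π / 2) :
    Real.sin α₁ ≤ |Real.sin t| := by
  rw [aux_abs_sin t (by linarith [Real.pi_pos])]
  have := Real.strictMonoOn_sin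
  rcases eq_or_lt_of_le h1 with h | h
  · rw [← h]
  · exact le_of_lt (this (Set.mem_Icc.2 ⟨by linarith [Real.pi_pos], by linarith⟩)
      (Set.mem_Icc.2 ⟨by linarith [abs_nonneg t, Real.pi_pos], h2⟩) h)

lemma aux_zero_sin (A α₁ : ℝ) (h0 : 0 < α₁) (h2 : α₁ ≤ π / 2)
    (hd : ∀ x : ℝ, Real.sin x = 0 → α₁ ≤ |A - x|) :
    Real.sin α₁ ≤ |Real.sin A| := by
  set k : ℤ := round (A / π) with hk
  have hpi := Real.pi_pos
  have hzero : Real.sin (k * π) = 0 := Real.sin_int_mul_pi k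
  have hnear : |A - k * π| ≤ π / 2 := by
    have h' : |A / π - k| * π ≤ (1/2) * π :=
      mul_le_mul_of_nonneg_right (abs_sub_round (A / π)) hpi.le
    have he : (A / π - k) * π = A - k * π := by field_simp
    calc |A - k * π| = |A / π - k| * π := by rw [← he, abs_mul, abs_of_pos hpi]
      _ ≤ π / 2 := by linarith
  have heq : |Real.sin A| = |Real.sin (A - k * π)| := by
    have h3 : Real.sin A = Real.sin (A - k * π) * Real.cos (k * π) := by
      have := Real.sin_add (A - k * π) (k * π)
      simp only [sub_add_cancel, hzero, mul_zero, add_zero] at this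
      linarith
    rw [h3, abs_mul, Real.abs_cos_int_mul_pi, mul_one]
  rw [heq]
  exact aux_sin_lb _ _ h0 (hd _ hzero) hnear

lemma aux_zero_cos (A α₁ : ℝ) (h0 : 0 < α₁) (h2 : α₁ ≤ π / 2)
    (hd : ∀ x : ℝ, Real.cos x = 0 → α₁ ≤ |A - x|) :
    Real.sin α₁ ≤ |Real.cos A| := by
  set k : ℤ := round ((A - π / 2) / π) with hk
  have hpi := Real.pi_pos
  set x : ℝ := π / 2 + k * π with hx
  have hzero : Real.cos x = 0 := by
    rw [Real.cos_eq_zero_iff]; exact ⟨k, by push_cast; ring⟩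
  have hnear : |A - x| ≤ π / 2 := by
    have h' : |(A - π / 2) / π - k| * π ≤ (1/2) * π :=
      mul_le_mul_of_nonneg_right (abs_sub_round ((A - π / 2) / π)) hpi.le
    have he : ((A - π / 2) / π - k) * π = A - x := by rw [hx]; field_simp; ring
    calc |A - x| = |(A - π / 2) / π - k| * π := by rw [← he, abs_mul, abs_of_pos hpi]
      _ ≤ π / 2 := by linarith
  have hsx : |Real.sin x| = 1 := by
    rw [hx, Real.sin_add, Real.sin_pi_div_two, Real.cos_pi_div_two, one_mul, zero_mul,
      add_zero, Real.abs_cos_int_mul_pi]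
  have heq : |Real.cos A| = |Real.sin (A - x)| := by
    have h3 : Real.cos A = -(Real.sin (A - x) * Real.sin x) := by
      have := Real.cos_add (A - x) x
      simp only [sub_add_cancel, hzero, mul_zero, zero_sub] at this
      linarith
    rw [h3, abs_neg, abs_mul, hsx, mul_one]
  rw [heq]
  exact aux_sin_lb _ _ h0 (hd _ hzero) hnear

lemma aux_hasDeriv (x : ℝ) (hx : 0 < x) :
    HasDerivAt (fun x : ℝ => (x + Real.sinh x * Real.cosh x) / Real.sinh x ^ 2)
      (((1 + (Real.cosh x * Real.cosh x + Real.sinh x * Real.sinh x)) * Real.sinh x ^ 2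
        - (x + Real.sinh x * Real.cosh x) * (2 * Real.sinh x ^ 1 * Real.cosh x)) / (Real.sinh x ^ 2) ^ 2) x := by
  have hs : Real.sinh x ≠ 0 := ne_of_gt (Real.sinh_pos_iff.2 hx)
  have hN : HasDerivAt (fun x : ℝ => x + Real.sinh x * Real.cosh x)
      (1 + (Real.cosh x * Real.cosh x + Real.sinh x * Real.sinh x)) x :=
    (hasDerivAt_id x).add ((Real.hasDerivAt_sinh x).mul (Real.hasDerivAt_cosh x))
  have hD : HasDerivAt (fun x : ℝ => Real.sinh x ^ 2)
      (2 * Real.sinh x ^ 1 * Real.cosh x) x := by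
    simpa using (Real.hasDerivAt_sinh x).fun_pow 2
  exact hN.div hD (pow_ne_zero 2 hs)

lemma aux_anti (s t : ℝ) (hs : 0 < s) (hst : s ≤ t) :
    (t + Real.sinh t * Real.cosh t) / Real.sinh t ^ 2
      ≤ (s + Real.sinh s * Real.cosh s) / Real.sinh s ^ 2 := by
  set h : ℝ → ℝ := fun x => (x + Real.sinh x * Real.cosh x) / Real.sinh x ^ 2 with hh
  have key : AntitoneOn h (Set.Icc s t) := by
    apply antitoneOn_of_deriv_nonpos (convex_Icc s t)
    · intro x hx
      have hx0 : 0 < x := lt_of_lt_of_le hs (hx.1)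
      exact (aux_hasDeriv x hx0).continuousAt.continuousWithinAt
    · intro x hx
      rw [interior_Icc] at hx
      have hx0 : 0 < x := lt_of_lt_of_le hs hx.1.le
      exact (aux_hasDeriv x hx0).differentiableAt.differentiableWithinAt
    · intro x hx
      rw [interior_Icc] at hx
      have hx0 : 0 < x := lt_of_lt_of_le hs hx.1.le
      rw [(aux_hasDeriv x hx0).deriv]
      apply div_nonpos_of_nonpos_of_nonneg _ (by positivity)
      have hc := Real.cosh_sq x
      have hsp : 0 < Real.sinh x := Real.sinh_pos_iff.2 hx0
      have hcp : 0 < Real.cosh x := Real.cosh_pos x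
      have : (1 + (Real.cosh x * Real.cosh x + Real.sinh x * Real.sinh x)) * Real.sinh x ^ 2
          - (x + Real.sinh x * Real.cosh x) * (2 * Real.sinh x ^ 1 * Real.cosh x)
          = -(2 * x * Real.sinh x * Real.cosh x) := by
        nlinarith [hc]
      rw [this]
      nlinarith [mul_pos hx0 (mul_pos hsp hcp)]
  exact key (Set.mem_Icc.2 ⟨le_refl s, hst⟩) (Set.mem_Icc.2 ⟨hst, le_refl t⟩) hst

lemma aux_integral (c θ : ℝ) (hc : c ≠ 0) (hθ : 0 < θ) :
    ∫ φ in Set.Ioo (0:ℝ) θ, Real.cosh (c * φ) ^ 2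
      = θ / 2 + Real.sinh (c * θ) * Real.cosh (c * θ) / (2 * c) := by
  rw [← MeasureTheory.integral_Ioc_eq_integral_Ioo,
    ← intervalIntegral.integral_of_le hθ.le]
  have key : ∀ φ : ℝ, HasDerivAt (fun φ : ℝ => φ / 2 + Real.sinh (c * φ) * Real.cosh (c * φ) / (2 * c))
      (Real.cosh (c * φ) ^ 2) φ := by
    intro φ
    have h1 : HasDerivAt (fun φ : ℝ => c * φ) c φ := by
      simpa using (hasDerivAt_id φ).const_mul c
    have hsh : HasDerivAt (fun φ : ℝ => Real.sinh (c * φ)) (Real.cosh (c * φ) * c) φ :=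
      (Real.hasDerivAt_sinh _).comp φ h1
    have hch : HasDerivAt (fun φ : ℝ => Real.cosh (c * φ)) (Real.sinh (c * φ) * c) φ :=
      (Real.hasDerivAt_cosh _).comp φ h1
    have := ((hasDerivAt_id φ).div_const 2).add (((hsh.mul hch).div_const (2 * c)))
    refine this.congr_deriv ?_
    have hc2 := Real.cosh_sq (c * φ)
    rw [show Real.cosh (c * φ) * c * Real.cosh (c * φ) + Real.sinh (c * φ) * (Real.sinh (c * φ) * c) = (2 * c) * ((Real.cosh (c * φ) ^ 2 + Real.sinh (c * φ) ^ 2) / 2) by ring,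
      mul_div_cancel_left₀ _ (mul_ne_zero two_ne_zero hc)]
    linear_combination -hc2 / 2
  rw [intervalIntegral.integral_eq_sub_of_hasDerivAt (fun φ _ => key φ)
    (((Real.continuous_cosh.comp (continuous_const.mul continuous_id)).pow 2).intervalIntegrable 0 θ)]
  simp

theorem stmt_11 (α₀ α₁ θ : ℝ) (hα₀ : 0 < α₀) (hα₁ : α₁ ∈ Set.Ioc 0 (Real.pi / 2))
    (hθ : 0 < θ) (f g : ℂ → ℂ)
    (hf : f = Complex.sin ∨ f = Complex.cos)
    (hg : g = Complex.sin ∨ g = Complex.cos)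
    (lam : ℂ) (hlam : lam ≠ 0) (hre : θ * |lam.re| ≤ α₀)
    (hdist : ∀ x : ℝ, g x = 0 → α₁ ≤ |θ * |lam.re| - x|) :
    ‖lam‖ *
        ∫ φ in Set.Ioo (0 : ℝ) θ,
          ‖f (lam * φ)‖ ^ 2 / ‖g (lam * θ)‖ ^ 2
      ≤ max (2 * α₀ * Real.cosh α₀ ^ 2 / Real.sin α₁ ^ 2)
          ((α₀ + Real.sinh α₀ * Real.cosh α₀) / Real.sinh α₀ ^ 2) := by
  obtain ⟨hα₁0, hα₁2⟩ := hα₁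
  set a : ℝ := lam.re with ha
  set b : ℝ := lam.im with hb
  have hpi := Real.pi_pos
  -- re/im of lam * φ
  have him : ∀ φ : ℝ, (lam * (φ:ℂ)).im = b * φ := fun φ => by simp [Complex.mul_im, hb]
  have hre' : ∀ φ : ℝ, (lam * (φ:ℂ)).re = a * φ := fun φ => by simp [Complex.mul_re, ha]
  -- rewrite the integral
  rw [MeasureTheory.integral_div]
  set D : ℝ := ‖g (lam * (θ:ℂ))‖ ^ 2 with hD
  set I : ℝ := ∫ φ in Set.Ioo (0:ℝ) θ, ‖f (lam * (φ:ℂ))‖ ^ 2 with hI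
  have hD0 : 0 ≤ D := by positivity
  -- integrability
  have hcontf : Continuous fun φ : ℝ => ‖f (lam * (φ:ℂ))‖ ^ 2 := by
    have : Continuous f := by rcases hf with rfl | rfl
                              exacts [Complex.continuous_sin, Complex.continuous_cos]
    exact (continuous_norm.comp (this.comp (continuous_const.mul Complex.continuous_ofReal))).pow 2
  have hintf : MeasureTheory.IntegrableOn (fun φ : ℝ => ‖f (lam * (φ:ℂ))‖ ^ 2)
      (Set.Ioo (0:ℝ) θ) := (hcontf.integrableOn_Icc).mono_set Set.Ioo_subset_Icc_self
  have hcontc : Continuous fun φ : ℝ => Real.cosh (b * φ) ^ 2 :=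
    (Real.continuous_cosh.comp (continuous_const.mul continuous_id)).pow 2
  have hintc : MeasureTheory.IntegrableOn (fun φ : ℝ => Real.cosh (b * φ) ^ 2)
      (Set.Ioo (0:ℝ) θ) := (hcontc.integrableOn_Icc).mono_set Set.Ioo_subset_Icc_self
  have hI0 : 0 ≤ I := MeasureTheory.setIntegral_nonneg measurableSet_Ioo (fun x _ => by positivity)
  -- I ≤ J
  have hIJ : I ≤ ∫ φ in Set.Ioo (0:ℝ) θ, Real.cosh (b * φ) ^ 2 := by
    apply MeasureTheory.setIntegral_mono_on hintf hintc measurableSet_Ioo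
    intro φ _
    have := aux_upper f hf (lam * φ)
    rwa [him φ] at this
  have habs : θ * ‖lam‖ ≤ θ * |a| + θ * |b| := by
    have := Complex.norm_le_abs_re_add_abs_im lam
    nlinarith
  by_cases hB : θ * |b| ≤ α₀
  · -- Case 1
    apply le_trans _ (le_max_left _ _)
    have hsin1 : 0 < Real.sin α₁ :=
      Real.sin_pos_of_pos_of_lt_pi hα₁0 (lt_of_le_of_lt hα₁2 (by linarith))
    -- D lower bound
    have hsq : ∀ u : ℝ, Real.sin (θ * |u|) ^ 2 = Real.sin (u * θ) ^ 2 := by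
      intro u; rcases abs_cases u with ⟨h, _⟩ | ⟨h, _⟩
      · rw [h, mul_comm]
      · rw [h, show θ * -u = -(u * θ) by ring, Real.sin_neg]; ring
    have hsqc : ∀ u : ℝ, Real.cos (θ * |u|) ^ 2 = Real.cos (u * θ) ^ 2 := by
      intro u; rcases abs_cases u with ⟨h, _⟩ | ⟨h, _⟩
      · rw [h, mul_comm]
      · rw [h, show θ * -u = -(u * θ) by ring, Real.cos_neg]
    have hDlb : Real.sin α₁ ^ 2 ≤ D := by
      rcases hg with rfl | rfl
      · have h1 : Real.sin α₁ ≤ |Real.sin (θ * |a|)| := by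
          apply aux_zero_sin _ _ hα₁0 hα₁2
          intro x hx
          exact hdist x (by rw [← Complex.ofReal_sin, hx, Complex.ofReal_zero])
        have h2 : Real.sin α₁ ^ 2 ≤ Real.sin (θ * |a|) ^ 2 := by
          rw [← sq_abs (Real.sin (θ * |a|))]
          exact pow_le_pow_left₀ hsin1.le h1 2
        calc Real.sin α₁ ^ 2 ≤ Real.sin (a * θ) ^ 2 := by rw [← hsq a]; exact h2
          _ ≤ D := by
              have := aux_lower_re_sin (lam * (θ:ℂ))
              rwa [hre' θ] at this
      · have h1 : Real.sin α₁ ≤ |Real.cos (θ * |a|)| := by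
          apply aux_zero_cos _ _ hα₁0 hα₁2
          intro x hx
          exact hdist x (by rw [← Complex.ofReal_cos, hx, Complex.ofReal_zero])
        have h2 : Real.sin α₁ ^ 2 ≤ Real.cos (θ * |a|) ^ 2 := by
          rw [← sq_abs (Real.cos (θ * |a|))]
          exact pow_le_pow_left₀ hsin1.le h1 2
        calc Real.sin α₁ ^ 2 ≤ Real.cos (a * θ) ^ 2 := by rw [← hsqc a]; exact h2
          _ ≤ D := by
              have := aux_lower_re_cos (lam * (θ:ℂ))
              rwa [hre' θ] at this
    -- J ≤ θ * cosh α₀ ^ 2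
    have hJ : (∫ φ in Set.Ioo (0:ℝ) θ, Real.cosh (b * φ) ^ 2) ≤ θ * Real.cosh α₀ ^ 2 := by
      have h1 : (∫ φ in Set.Ioo (0:ℝ) θ, Real.cosh (b * φ) ^ 2)
          ≤ ∫ _ in Set.Ioo (0:ℝ) θ, Real.cosh α₀ ^ 2 := by
        apply MeasureTheory.setIntegral_mono_on hintc
          (MeasureTheory.integrableOn_const measure_Ioo_lt_top.ne)
          measurableSet_Ioo
        intro φ hφ
        have hbφ : |b * φ| ≤ |α₀| := by
          rw [abs_of_pos hα₀, abs_mul, abs_of_pos hφ.1]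
          nlinarith [hφ.2, abs_nonneg b]
        have h2 := Real.cosh_le_cosh.2 hbφ
        exact pow_le_pow_left₀ (Real.cosh_pos _).le h2 2
      rw [MeasureTheory.setIntegral_const, Real.volume_real_Ioo_of_le hθ.le, sub_zero,
        smul_eq_mul] at h1
      exact h1
    have hlam1 : ‖lam‖ ≤ 2 * α₀ / θ := by
      rw [le_div_iff₀ hθ]; nlinarith
    calc ‖lam‖ * (I / D)
        ≤ (2 * α₀ / θ) * ((θ * Real.cosh α₀ ^ 2) / Real.sin α₁ ^ 2) := by
          apply mul_le_mul hlam1 _ (div_nonneg hI0 hD0) (by positivity)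
          exact div_le_div₀ (by positivity) (hIJ.trans hJ) (pow_pos hsin1 2) hDlb
      _ = 2 * α₀ * Real.cosh α₀ ^ 2 / Real.sin α₁ ^ 2 := by field_simp
  · -- Case 2
    push_neg at hB
    apply le_trans _ (le_max_right _ _)
    have hb0 : b ≠ 0 := by
      intro h; rw [h, abs_zero, mul_zero] at hB; linarith
    have habs_b : 0 < |b| := abs_pos.2 hb0
    set B : ℝ := θ * |b| with hBdef
    have hBpos : 0 < B := by positivity
    have hshB : 0 < Real.sinh B := Real.sinh_pos_iff.2 hBpos
    have hchB : 0 < Real.cosh B := Real.cosh_pos B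
    -- J value
    have hJ : (∫ φ in Set.Ioo (0:ℝ) θ, Real.cosh (b * φ) ^ 2)
        = θ / 2 + Real.sinh B * Real.cosh B / (2 * |b|) := by
      rw [aux_integral b θ hb0 hθ]
      rcases abs_cases b with ⟨h, _⟩ | ⟨h, _⟩
      · rw [hBdef, h, mul_comm θ b]
      · rw [hBdef, h, show θ * -b = -(b * θ) by ring, Real.sinh_neg, Real.cosh_neg]
        field_simp
    have hJ0 : (0:ℝ) ≤ ∫ φ in Set.Ioo (0:ℝ) θ, Real.cosh (b * φ) ^ 2 :=
      MeasureTheory.setIntegral_nonneg measurableSet_Ioo (fun x _ => by positivity)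
    -- D lower bound
    have hDlb : Real.sinh B ^ 2 ≤ D := by
      have h1 := aux_lower_sinh g hg (lam * (θ:ℂ))
      rw [him θ] at h1
      have h2 : Real.sinh (b * θ) ^ 2 = Real.sinh B ^ 2 := by
        rcases abs_cases b with ⟨h, _⟩ | ⟨h, _⟩
        · rw [hBdef, h, mul_comm θ b]
        · rw [hBdef, h, show θ * -b = -(b * θ) by ring, Real.sinh_neg]; ring
      rwa [h2] at h1
    have hlam2 : ‖lam‖ ≤ 2 * |b| := by
      have : θ * ‖lam‖ ≤ 2 * B := by rw [hBdef]; nlinarith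
      rw [hBdef] at this
      nlinarith [norm_nonneg lam]
    calc ‖lam‖ * (I / D)
        ≤ (2 * |b|) * ((θ / 2 + Real.sinh B * Real.cosh B / (2 * |b|)) / Real.sinh B ^ 2) := by
          apply mul_le_mul hlam2 _ (div_nonneg hI0 hD0) (by positivity)
          apply div_le_div₀ (by rw [← hJ]; exact hJ0) (by rw [← hJ]; exact hIJ) (pow_pos hshB 2) hDlb
      _ = (B + Real.sinh B * Real.cosh B) / Real.sinh B ^ 2 := by
          rw [hBdef]; field_simp
      _ ≤ (α₀ + Real.sinh α₀ * Real.cosh α₀) / Real.sinh α₀ ^ 2 :=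
          aux_anti α₀ B hα₀ hB.le
end
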